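/- arXiv:1212.5434 — 5 statements merged into one kernel-verified Lean document; each statement's English description precedes it below -/
import Mathlib

section
/- For any real number a > 0, the function f_a(v) = a·exp(-a²v/(2(1-v))) / (√(2π)·v^{1/2}·(1-v)^{3/2}) is a probability density on (0,1), i.e. ∫₀¹ f_a(v) dv = 1. -/
open MeasureTheory Real

/-- The function `f_a(v) = a·exp(-a²v/(2(1-v))) / (√(2π)·v^{1/2}·(1-v)^{3/2})`
is a probability density on `(0,1)` for every `a > 0`. -/
theorem fragment_mass_density_integrates_to_one (a : ℝ) (ha : 0 < a) :
    ∫ v in Set.Ioo (0 : ℝ) 1,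
      a * Real.exp (-(a ^ 2 * v) / (2 * (1 - v))) /
        (Real.sqrt (2 * Real.pi) * v ^ ((1 : ℝ) / 2) * (1 - v) ^ ((3 : ℝ) / 2)) = 1 := by
  set F : ℝ → ℝ := fun v => a * Real.exp (-(a ^ 2 * v) / (2 * (1 - v))) /
        (Real.sqrt (2 * Real.pi) * v ^ ((1 : ℝ) / 2) * (1 - v) ^ ((3 : ℝ) / 2)) with hF
  set f : ℝ → ℝ := fun t => t ^ 2 / (1 + t ^ 2) with hf
  have himg : f '' Set.Ioi (0 : ℝ) = Set.Ioo (0 : ℝ) 1 := by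
    ext v
    constructor
    · rintro ⟨t, ht, rfl⟩
      have ht' : (0:ℝ) < t := ht
      have h1 : (0:ℝ) < 1 + t ^ 2 := by positivity
      constructor
      · positivity
      · rw [div_lt_one h1]; nlinarith
    · rintro ⟨hv0, hv1⟩
      refine ⟨Real.sqrt (v / (1 - v)), ?_, ?_⟩
      · have : 0 < v / (1 - v) := div_pos hv0 (by linarith)
        exact Real.sqrt_pos.mpr this
      · have h1v : (0:ℝ) < 1 - v := by linarith
        have hs : Real.sqrt (v / (1 - v)) ^ 2 = v / (1 - v) :=
          Real.sq_sqrt (le_of_lt (div_pos hv0 h1v))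
        simp only [hf, hs]
        field_simp
        ring
  have hderiv : ∀ t ∈ Set.Ioi (0:ℝ),
      HasDerivWithinAt f (2 * t / (1 + t ^ 2) ^ 2) (Set.Ioi 0) t := by
    intro t ht
    have h1 : (1 + t ^ 2) ≠ 0 := by positivity
    have : HasDerivAt f ((2 * t * (1 + t ^ 2) - t ^ 2 * (2 * t)) / (1 + t ^ 2) ^ 2) t := by
      have h2 : HasDerivAt (fun t : ℝ => t ^ 2) (2 * t) t := by
        simpa using hasDerivAt_pow 2 t
      have h3 : HasDerivAt (fun t : ℝ => 1 + t ^ 2) (2 * t) t := by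
        have h4 := (hasDerivAt_const t (1:ℝ)).add h2
        rw [zero_add] at h4
        exact h4
      exact h2.div h3 h1
    have heq : (2 * t * (1 + t ^ 2) - t ^ 2 * (2 * t)) / (1 + t ^ 2) ^ 2
        = 2 * t / (1 + t ^ 2) ^ 2 := by ring_nf
    rw [heq] at this
    exact this.hasDerivWithinAt
  have hinj : Set.InjOn f (Set.Ioi 0) := by
    intro x hx y hy hxy
    have hx' : (0:ℝ) < x := hx
    have hy' : (0:ℝ) < y := hy
    have h1 : (1 + x ^ 2) ≠ 0 := by positivity
    have h2 : (1 + y ^ 2) ≠ 0 := by positivity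
    have : x ^ 2 * (1 + y ^ 2) = y ^ 2 * (1 + x ^ 2) := by
      have hxy' : x ^ 2 / (1 + x ^ 2) = y ^ 2 / (1 + y ^ 2) := hxy
      rw [div_eq_div_iff h1 h2] at hxy'; linarith [hxy']
    nlinarith
  have key := integral_image_eq_integral_abs_deriv_smul measurableSet_Ioi hderiv hinj F
  rw [himg] at key
  rw [key]
  have hcong : ∀ t ∈ Set.Ioi (0:ℝ),
      |2 * t / (1 + t ^ 2) ^ 2| • F (f t)
        = (2 * a / Real.sqrt (2 * Real.pi)) * Real.exp (-(a ^ 2 / 2) * t ^ 2) := by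
    intro t ht
    have ht' : (0:ℝ) < t := ht
    have h1 : (0:ℝ) < 1 + t ^ 2 := by positivity
    have hft : f t = t ^ 2 / (1 + t ^ 2) := rfl
    have h1f : 1 - f t = 1 / (1 + t ^ 2) := by
      rw [hft]; field_simp; ring
    have hexp : -(a ^ 2 * f t) / (2 * (1 - f t)) = -(a ^ 2 / 2) * t ^ 2 := by
      rw [hft, h1f]; field_simp
    have hv12 : (f t) ^ ((1:ℝ)/2) = t / (1 + t ^ 2) ^ ((1:ℝ)/2) := by
      rw [hft, Real.div_rpow (by positivity) (by positivity),
        ← Real.rpow_natCast t 2, ← Real.rpow_mul ht'.le]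
      norm_num
    have h32 : (1 - f t) ^ ((3:ℝ)/2) = 1 / (1 + t ^ 2) ^ ((3:ℝ)/2) := by
      rw [h1f, Real.div_rpow (by norm_num) h1.le, Real.one_rpow]
    have habs : |2 * t / (1 + t ^ 2) ^ 2| = 2 * t / (1 + t ^ 2) ^ 2 :=
      abs_of_pos (by positivity)
    rw [smul_eq_mul, habs, hF]
    simp only [hexp, hv12, h32]
    have hr1 : (0:ℝ) < (1 + t ^ 2) ^ ((1:ℝ)/2) := Real.rpow_pos_of_pos h1 _
    have hr3 : (0:ℝ) < (1 + t ^ 2) ^ ((3:ℝ)/2) := Real.rpow_pos_of_pos h1 _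
    have hmul : (1 + t ^ 2) ^ ((1:ℝ)/2) * (1 + t ^ 2) ^ ((3:ℝ)/2) = (1 + t ^ 2) ^ 2 := by
      rw [← Real.rpow_add h1, show (1:ℝ)/2 + 3/2 = ((2:ℕ):ℝ) by norm_num, Real.rpow_natCast]
    have hsq : Real.sqrt (2 * Real.pi) > 0 := Real.sqrt_pos.mpr (by positivity)
    rw [← hmul]
    field_simp
  rw [setIntegral_congr_fun measurableSet_Ioi hcong]
  rw [MeasureTheory.integral_const_mul, integral_gaussian_Ioi (a ^ 2 / 2)]
  have hs2 : Real.sqrt (Real.pi / (a ^ 2 / 2)) = Real.sqrt (2 * Real.pi) / a := by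
    rw [show Real.pi / (a ^ 2 / 2) = (2 * Real.pi) / a ^ 2 by ring,
      Real.sqrt_div (by positivity), Real.sqrt_sq ha.le]
  rw [hs2]
  have hsq : Real.sqrt (2 * Real.pi) > 0 := Real.sqrt_pos.mpr (by positivity)
  field_simp
end

section
/- Let (aₙ) be a nonnegative real sequence such that (1/√n)·∑_{k=1}^n a_k converges to a finite limit as n → ∞. Then (1/n)·∑_{k=1}^n a_k² converges to 0. -/
open Filter

/-- If `(aₙ)` is nonnegative and `(1/√n)·∑_{k=1}^n a_k` converges to a finite limit,
then `(1/n)·∑_{k=1}^n a_k²` converges to `0`. -/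
theorem avg_sq_tendsto_zero (a : ℕ → ℝ) (ha : ∀ n, 0 ≤ a n) (L : ℝ)
    (h : Tendsto (fun n : ℕ => (∑ k ∈ Finset.Icc 1 n, a k) / Real.sqrt n) atTop (nhds L)) :
    Tendsto (fun n : ℕ => (∑ k ∈ Finset.Icc 1 n, (a k) ^ 2) / n) atTop (nhds 0) := by
  set S : ℕ → ℝ := fun n => ∑ k ∈ Finset.Icc 1 n, a k with hSdef
  have hS0 : S 0 = 0 := by simp [hSdef]
  have hSnn : ∀ n, 0 ≤ S n := fun n => Finset.sum_nonneg fun k _ => ha k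
  -- boundedness: S n ≤ C √n
  obtain ⟨C₀, hC₀⟩ := h.bddAbove_range
  rw [mem_upperBounds] at hC₀
  set C := max C₀ 1 with hCdef
  have hCpos : (0:ℝ) < C := lt_of_lt_of_le one_pos (le_max_right _ _)
  have hC : ∀ n : ℕ, S n ≤ C * Real.sqrt n := by
    intro n
    rcases Nat.eq_zero_or_pos n with rfl | hn
    · simp [hS0]
    · have hs : 0 < Real.sqrt n := Real.sqrt_pos.mpr (by exact_mod_cast hn)
      have h1 : S n / Real.sqrt n ≤ C₀ := hC₀ _ (Set.mem_range_self n)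
      have h2 : S n ≤ C₀ * Real.sqrt n := (div_le_iff₀ hs).mp h1
      calc S n ≤ C₀ * Real.sqrt n := h2
        _ ≤ C * Real.sqrt n := mul_le_mul_of_nonneg_right (le_max_left _ _) hs.le
  -- ratio of square roots tends to 1
  have ht : Tendsto (fun n : ℕ => Real.sqrt n / Real.sqrt ((n:ℝ)+1)) atTop (nhds 1) := by
    have h1 : Tendsto (fun n : ℕ => ((n:ℝ) / ((n:ℝ)+1))) atTop (nhds 1) :=
      tendsto_natCast_div_add_atTop 1
    have h2 := (Real.continuous_sqrt.tendsto 1).comp h1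
    rw [Real.sqrt_one] at h2
    exact h2.congr fun n => Real.sqrt_div (Nat.cast_nonneg n) _
  -- a n / √n → 0
  have key : Tendsto (fun n : ℕ => a n / Real.sqrt n) atTop (nhds 0) := by
    rw [← tendsto_add_atTop_iff_nat 1]
    have heq : ∀ n : ℕ, a (n+1) / Real.sqrt ((n+1:ℕ):ℝ)
        = S (n+1) / Real.sqrt (((n+1:ℕ)):ℝ)
          - (S n / Real.sqrt n) * (Real.sqrt n / Real.sqrt ((n:ℝ)+1)) := by
      intro n
      have hsum : S (n+1) = S n + a (n+1) :=
        Finset.sum_Icc_succ_top (Nat.succ_le_succ (Nat.zero_le n)) a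
      have hcast : ((n+1:ℕ):ℝ) = (n:ℝ)+1 := by push_cast; ring
      rcases Nat.eq_zero_or_pos n with rfl | hn
      · simp [hS0, hsum]
      · have hsn : Real.sqrt n ≠ 0 := ne_of_gt (Real.sqrt_pos.mpr (by exact_mod_cast hn))
        have hsn1 : Real.sqrt ((n:ℝ)+1) ≠ 0 := ne_of_gt (Real.sqrt_pos.mpr (by positivity))
        rw [hcast, hsum]
        field_simp
        ring
    have hshift : Tendsto (fun n : ℕ => S (n+1) / Real.sqrt (((n+1:ℕ)):ℝ)) atTop (nhds L) :=
      h.comp (tendsto_add_atTop_nat 1)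
    have hfinal := hshift.sub (h.mul ht)
    rw [show L - L * 1 = 0 by ring] at hfinal
    exact hfinal.congr (fun n => (heq n).symm)
  -- main ε argument
  rw [Metric.tendsto_atTop]
  intro ε hε
  set ε' := ε / (2 * C) with hε'def
  have hε' : 0 < ε' := by positivity
  obtain ⟨N₀, hN₀⟩ := (Metric.tendsto_atTop.mp key) ε' hε'
  set N₁ := max N₀ 1 with hN₁def
  have hak : ∀ k : ℕ, N₁ ≤ k → a k ≤ ε' * Real.sqrt k := by
    intro k hk
    have h1 : 1 ≤ k := le_trans (le_max_right _ _) hk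
    have hsk : 0 < Real.sqrt k := Real.sqrt_pos.mpr (by exact_mod_cast h1)
    have h2 := hN₀ k (le_trans (le_max_left _ _) hk)
    rw [Real.dist_eq, sub_zero, abs_of_nonneg (div_nonneg (ha k) hsk.le)] at h2
    calc a k = a k / Real.sqrt k * Real.sqrt k := by field_simp
      _ ≤ ε' * Real.sqrt k := mul_le_mul_of_nonneg_right h2.le hsk.le
  set D := ∑ k ∈ Finset.Icc 1 N₁, (a k)^2 with hDdef
  have hD0 : 0 ≤ D := Finset.sum_nonneg fun k _ => sq_nonneg _
  have hDn : Tendsto (fun n : ℕ => D / n) atTop (nhds 0) :=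
    tendsto_const_div_atTop_nhds_zero_nat D
  obtain ⟨N₂, hN₂⟩ := (Metric.tendsto_atTop.mp hDn) (ε/2) (by positivity)
  refine ⟨max N₂ (N₁+1), fun n hn => ?_⟩
  have hnN1 : N₁ + 1 ≤ n := le_trans (le_max_right _ _) hn
  have hn1 : 1 ≤ n := le_trans (Nat.succ_le_succ (Nat.zero_le N₁)) hnN1
  have hnpos : (0:ℝ) < n := by exact_mod_cast hn1
  have hsplit : ∑ k ∈ Finset.Icc 1 n, (a k)^2 = D + ∑ k ∈ Finset.Ioc N₁ n, (a k)^2 := by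
    rw [hDdef, show Finset.Icc 1 n = Finset.Ioc 0 n from Finset.Icc_add_one_left_eq_Ioc 0 n,
      show Finset.Icc 1 N₁ = Finset.Ioc 0 N₁ from Finset.Icc_add_one_left_eq_Ioc 0 N₁]
    exact (Finset.sum_Ioc_consecutive _ (Nat.zero_le N₁)
      (le_trans (Nat.le_succ N₁) hnN1)).symm
  have htail : ∑ k ∈ Finset.Ioc N₁ n, (a k)^2 ≤ ε' * C * n := by
    have step1 : ∑ k ∈ Finset.Ioc N₁ n, (a k)^2
        ≤ ∑ k ∈ Finset.Ioc N₁ n, ε' * Real.sqrt n * a k := by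
      apply Finset.sum_le_sum
      intro k hk
      obtain ⟨hk1, hk2⟩ := Finset.mem_Ioc.mp hk
      have h1 : a k ≤ ε' * Real.sqrt k := hak k hk1.le
      have h2 : Real.sqrt k ≤ Real.sqrt n := Real.sqrt_le_sqrt (by exact_mod_cast hk2)
      have h3 : (a k)^2 ≤ (ε' * Real.sqrt k) * a k := by
        rw [sq]; exact mul_le_mul_of_nonneg_right h1 (ha k)
      calc (a k)^2 ≤ (ε' * Real.sqrt k) * a k := h3
        _ ≤ ε' * Real.sqrt n * a k := by
            apply mul_le_mul_of_nonneg_right _ (ha k)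
            exact mul_le_mul_of_nonneg_left h2 hε'.le
    have step2 : ∑ k ∈ Finset.Ioc N₁ n, a k ≤ S n := by
      apply Finset.sum_le_sum_of_subset_of_nonneg
      · intro k hk
        obtain ⟨hk1, hk2⟩ := Finset.mem_Ioc.mp hk
        have h1N : 1 ≤ N₁ := le_max_right _ _
        exact Finset.mem_Icc.mpr ⟨le_trans h1N hk1.le, hk2⟩
      · exact fun k _ _ => ha k
    calc ∑ k ∈ Finset.Ioc N₁ n, (a k)^2
        ≤ ∑ k ∈ Finset.Ioc N₁ n, ε' * Real.sqrt n * a k := step1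
      _ = ε' * Real.sqrt n * ∑ k ∈ Finset.Ioc N₁ n, a k := by rw [Finset.mul_sum]
      _ ≤ ε' * Real.sqrt n * S n := by
          apply mul_le_mul_of_nonneg_left step2 (by positivity)
      _ ≤ ε' * Real.sqrt n * (C * Real.sqrt n) :=
          mul_le_mul_of_nonneg_left (hC n) (by positivity)
      _ = ε' * C * ((Real.sqrt n) * (Real.sqrt n)) := by ring
      _ = ε' * C * n := by rw [Real.mul_self_sqrt (Nat.cast_nonneg n)]
  have hsumnn : 0 ≤ ∑ k ∈ Finset.Icc 1 n, (a k)^2 :=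
    Finset.sum_nonneg fun k _ => sq_nonneg _
  rw [Real.dist_eq, sub_zero, abs_of_nonneg (div_nonneg hsumnn hnpos.le)]
  have hd := hN₂ n (le_trans (le_max_left _ _) hn)
  rw [Real.dist_eq, sub_zero, abs_of_nonneg (div_nonneg hD0 hnpos.le)] at hd
  have hmain : (∑ k ∈ Finset.Icc 1 n, (a k)^2)/n ≤ D/n + ε' * C := by
    rw [hsplit, add_div]
    have : (∑ k ∈ Finset.Ioc N₁ n, (a k)^2)/n ≤ ε' * C := by
      rw [div_le_iff₀ hnpos]
      exact htail
    linarith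
  have heC : ε' * C = ε/2 := by
    rw [hε'def]; field_simp
  linarith
end

section
/- There exist constants C₁, C₂ > 0 such that the function G(x) = ∫₀^x ∫₀^s (1/(s-t))·((1-e^{-t})/t - (1-e^{-s})/s) dt ds satisfies G(x) ≤ C₁·x² and G(x) ≤ C₂·√x for all x ≥ 0. -/
open MeasureTheory

/-- The double-integral function arising in the second moment of the integrated
linear record process. -/
noncomputable def recordG (x : ℝ) : ℝ :=
  ∫ s in Set.Ioo (0 : ℝ) x, ∫ t in Set.Ioo (0 : ℝ) s,
    (1 / (s - t)) * ((1 - Real.exp (-t)) / t - (1 - Real.exp (-s)) / s)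

namespace RecordGAux

noncomputable def f (u : ℝ) : ℝ := (1 - Real.exp (-u)) / u

noncomputable def hF (s t : ℝ) : ℝ :=
  (1 / (s - t)) * ((1 - Real.exp (-t)) / t - (1 - Real.exp (-s)) / s)

noncomputable def innerI (s : ℝ) : ℝ := ∫ t in Set.Ioo (0 : ℝ) s, hF s t

lemma recordG_eq (x : ℝ) : recordG x = ∫ s in Set.Ioo (0 : ℝ) x, innerI s := rfl

lemma hF_eq (s t : ℝ) : hF s t = (1 / (s - t)) * (f t - f s) := rfl

lemma f_hasDeriv {u : ℝ} (hu : u ≠ 0) :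
    HasDerivAt f ((Real.exp (-u) * (u + 1) - 1) / u ^ 2) u := by
  have h1 : HasDerivAt (fun u : ℝ => 1 - Real.exp (-u)) (Real.exp (-u)) u := by
    have := ((Real.hasDerivAt_exp (-u)).comp u (hasDerivAt_neg u))
    exact ((hasDerivAt_const u (1:ℝ)).sub this).congr_deriv (by ring)
  have h2 := h1.div (hasDerivAt_id u) hu
  refine h2.congr_deriv ?_
  simp only [id]
  ring

lemma num_nonneg {c : ℝ} (hc : 0 ≤ c) : 0 ≤ 1 - Real.exp (-c) * (c + 1) := by
  have h := Real.add_one_le_exp c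
  have hp := Real.exp_pos c
  have he : Real.exp (-c) = (Real.exp c)⁻¹ := Real.exp_neg c
  rw [he, sub_nonneg, inv_mul_le_iff₀ hp]
  linarith

lemma num_le_sq {c : ℝ} (hc : 0 ≤ c) : 1 - Real.exp (-c) * (c + 1) ≤ c ^ 2 := by
  have h := Real.add_one_le_exp (-c)
  nlinarith [Real.exp_pos (-c)]

/-- MVT representation of the slope. -/
lemma slope_rep {s t : ℝ} (ht : 0 < t) (hts : t < s) :
    ∃ c ∈ Set.Ioo t s,
      f t - f s = ((1 - Real.exp (-c) * (c + 1)) / c ^ 2) * (s - t) := by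
  have hcont : ContinuousOn f (Set.Icc t s) := by
    apply ContinuousOn.div
    · fun_prop
    · fun_prop
    · intro u hu; exact ne_of_gt (lt_of_lt_of_le ht hu.1)
  have hderiv : ∀ c ∈ Set.Ioo t s,
      HasDerivAt f ((Real.exp (-c) * (c + 1) - 1) / c ^ 2) c := fun c hc =>
    f_hasDeriv (ne_of_gt (lt_trans ht hc.1))
  obtain ⟨c, hc, hcs⟩ := exists_hasDerivAt_eq_slope f _ hts hcont hderiv
  refine ⟨c, hc, ?_⟩
  have hst : s - t ≠ 0 := ne_of_gt (by linarith)
  have hc0 : c ≠ 0 := ne_of_gt (lt_trans ht hc.1)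
  have h1 : ((Real.exp (-c) * (c + 1) - 1) / c ^ 2) * (s - t) = f s - f t := by
    rw [hcs]; field_simp
  have h2 : ((1 - Real.exp (-c) * (c + 1)) / c ^ 2) * (s - t)
      = -(((Real.exp (-c) * (c + 1) - 1) / c ^ 2) * (s - t)) := by ring
  rw [h2, h1]; ring

lemma hF_nonneg {s t : ℝ} (ht : 0 < t) (hts : t < s) : 0 ≤ hF s t := by
  obtain ⟨c, hc, hrep⟩ := slope_rep ht hts
  rw [hF_eq, hrep]
  have hc0 : 0 < c := lt_trans ht hc.1
  have h1 := num_nonneg hc0.le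
  have hst : (0:ℝ) < s - t := by linarith [hc.2, hc.1]
  exact mul_nonneg (by positivity) (mul_nonneg (div_nonneg h1 (sq_nonneg c)) hst.le)

lemma hF_le_one {s t : ℝ} (ht : 0 < t) (hts : t < s) : hF s t ≤ 1 := by
  obtain ⟨c, hc, hrep⟩ := slope_rep ht hts
  have hc0 : 0 < c := lt_trans ht hc.1
  have hst : (0:ℝ) < s - t := by linarith
  rw [hF_eq, hrep]
  have key : (1 / (s - t)) * ((1 - Real.exp (-c) * (c + 1)) / c ^ 2 * (s - t))
      = (1 - Real.exp (-c) * (c + 1)) / c ^ 2 := by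
    field_simp
  rw [key, div_le_one (by positivity)]
  exact num_le_sq hc0.le

lemma hF_le_tail {s t : ℝ} (ht : 0 < t) (hts : t < s) (h2 : s / 2 ≤ t) :
    hF s t ≤ 4 / s ^ 2 := by
  obtain ⟨c, hc, hrep⟩ := slope_rep ht hts
  have hc0 : 0 < c := lt_trans ht hc.1
  have hs0 : 0 < s := lt_trans ht hts
  have hst : (0:ℝ) < s - t := by linarith
  rw [hF_eq, hrep]
  have key : (1 / (s - t)) * ((1 - Real.exp (-c) * (c + 1)) / c ^ 2 * (s - t))
      = (1 - Real.exp (-c) * (c + 1)) / c ^ 2 := by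
    field_simp
  rw [key]
  have hnum : 1 - Real.exp (-c) * (c + 1) ≤ 1 := by
    nlinarith [Real.exp_pos (-c)]
  have hcs : s / 2 ≤ c := le_of_lt (lt_of_le_of_lt h2 hc.1)
  have hc2 : s ^ 2 / 4 ≤ c ^ 2 := by nlinarith
  calc (1 - Real.exp (-c) * (c + 1)) / c ^ 2 ≤ 1 / (s ^ 2 / 4) := by
        apply div_le_div₀ (by positivity) hnum (by positivity) hc2
    _ = 4 / s ^ 2 := by field_simp

lemma f_nonneg {u : ℝ} (hu : 0 < u) : 0 ≤ f u := by
  have : Real.exp (-u) ≤ 1 := Real.exp_le_one_iff.mpr (by linarith)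
  exact div_nonneg (by linarith) hu.le

lemma f_le_inv_sqrt {u : ℝ} (hu : 0 < u) : f u ≤ 1 / Real.sqrt u := by
  have hs : 0 < Real.sqrt u := Real.sqrt_pos.mpr hu
  have hss : Real.sqrt u * Real.sqrt u = u := Real.mul_self_sqrt hu.le
  have hnum : 1 - Real.exp (-u) ≤ Real.sqrt u := by
    rcases le_total u 1 with h | h
    · have h1 : 1 - Real.exp (-u) ≤ u := by
        have := Real.add_one_le_exp (-u); linarith
      have h2 : u ≤ Real.sqrt u := by nlinarith [Real.sqrt_nonneg u]
      linarith
    · have h1 : 1 - Real.exp (-u) ≤ 1 := by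
        have := Real.exp_pos (-u); linarith
      have h2 : (1:ℝ) ≤ Real.sqrt u := by nlinarith
      linarith
  have h3 : Real.sqrt u / u = 1 / Real.sqrt u := by
    rw [div_eq_div_iff (ne_of_gt hu) (ne_of_gt hs), one_mul, hss]
  calc f u ≤ Real.sqrt u / u := by
        exact (div_le_div_iff_of_pos_right hu).mpr hnum
    _ = 1 / Real.sqrt u := h3

lemma hF_le_head {s t : ℝ} (ht : 0 < t) (h2 : t < s / 2) :
    hF s t ≤ (2 / s) * (1 / Real.sqrt t) := by
  have hs : 0 < s := by linarith
  have hts : t < s := by linarith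
  have hst : (0:ℝ) < s - t := by linarith
  have hhalf : s / 2 ≤ s - t := by linarith
  have hfs : 0 ≤ f s := f_nonneg hs
  have hft : 0 ≤ f t := f_nonneg ht
  have h1 : hF s t ≤ (1 / (s - t)) * f t := by
    rw [hF_eq]
    apply mul_le_mul_of_nonneg_left (by linarith) (by positivity)
  have h2' : (1 : ℝ) / (s - t) ≤ 2 / s := by
    rw [div_le_div_iff₀ hst hs]; linarith
  calc hF s t ≤ (1 / (s - t)) * f t := h1
    _ ≤ (2 / s) * (1 / Real.sqrt t) := by
        apply mul_le_mul h2' (f_le_inv_sqrt ht) hft (by positivity)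

lemma hF_measurable : Measurable (Function.uncurry hF) := by
  unfold Function.uncurry hF
  fun_prop

lemma hF_measurable' (s : ℝ) : Measurable (hF s) :=
  hF_measurable.comp (measurable_const.prodMk measurable_id)

lemma integrableOn_hF {s : ℝ} : IntegrableOn (hF s) (Set.Ioo 0 s) := by
  apply Measure.integrableOn_of_bounded (M := 1)
  · rw [Real.volume_Ioo]; exact ENNReal.ofReal_ne_top
  · exact (hF_measurable' s).aestronglyMeasurable
  · rw [ae_restrict_iff' measurableSet_Ioo]
    filter_upwards with t htm
    rw [Real.norm_eq_abs, abs_le]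
    exact ⟨by linarith [hF_nonneg htm.1 htm.2], hF_le_one htm.1 htm.2⟩

lemma innerI_nonneg (s : ℝ) : 0 ≤ innerI s :=
  setIntegral_nonneg measurableSet_Ioo fun t ht => hF_nonneg ht.1 ht.2

lemma innerI_le (s : ℝ) (hs : 0 < s) : innerI s ≤ s := by
  have h := norm_setIntegral_le_of_norm_le_const (C := 1) (f := hF s)
    (s := Set.Ioo (0:ℝ) s) (μ := volume)
    (by rw [Real.volume_Ioo]; exact ENNReal.ofReal_lt_top)
    (fun t ht => by
      rw [Real.norm_eq_abs, abs_le]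
      exact ⟨by linarith [hF_nonneg ht.1 ht.2], hF_le_one ht.1 ht.2⟩)
  rw [Measure.real, Real.volume_Ioo, one_mul, ENNReal.toReal_ofReal (by linarith)] at h
  calc innerI s ≤ ‖innerI s‖ := le_abs_self _
    _ ≤ s - 0 := h
    _ = s := by ring

lemma rpow_integrableOn {a : ℝ} (ha : 0 ≤ a) :
    IntegrableOn (fun t : ℝ => t ^ (-(1/2) : ℝ)) (Set.Ioo 0 a) := by
  have h : IntervalIntegrable (fun t : ℝ => t ^ (-(1/2):ℝ)) volume 0 a :=
    intervalIntegral.intervalIntegrable_rpow' (by norm_num)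
  exact ((intervalIntegrable_iff_integrableOn_Ioc_of_le ha).mp h).mono_set
    Set.Ioo_subset_Ioc_self

lemma rpow_setIntegral {a : ℝ} (ha : 0 ≤ a) :
    ∫ t in Set.Ioo (0:ℝ) a, t ^ (-(1/2) : ℝ) = 2 * Real.sqrt a := by
  rw [← integral_Ioc_eq_integral_Ioo, ← intervalIntegral.integral_of_le ha,
    integral_rpow (Or.inl (by norm_num))]
  rw [show (-(1/2) : ℝ) + 1 = 1/2 by norm_num, Real.zero_rpow (by norm_num),
    ← Real.sqrt_eq_rpow]
  ring

lemma innerI_tail {s : ℝ} (hs : 1 ≤ s) : innerI s ≤ 6 / Real.sqrt s := by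
  have hs0 : (0:ℝ) < s := by linarith
  have hh0 : (0:ℝ) < s / 2 := by linarith
  have hsq : 0 < Real.sqrt s := Real.sqrt_pos.mpr hs0
  have hss : Real.sqrt s * Real.sqrt s = s := Real.mul_self_sqrt hs0.le
  have hsplit : Set.Ioo (0:ℝ) (s/2) ∪ Set.Ico (s/2) s = Set.Ioo (0:ℝ) s :=
    Set.Ioo_union_Ico_eq_Ioo hh0 (by linarith)
  have hdisj : Disjoint (Set.Ioo (0:ℝ) (s/2)) (Set.Ico (s/2) s) :=
    Set.disjoint_left.mpr (fun t ht1 ht2 => absurd ht2.1 (not_le.mpr ht1.2))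
  have hint1 : IntegrableOn (hF s) (Set.Ioo 0 (s/2)) :=
    integrableOn_hF.mono_set (Set.Ioo_subset_Ioo le_rfl (by linarith))
  have hint2 : IntegrableOn (hF s) (Set.Ico (s/2) s) :=
    integrableOn_hF.mono_set (fun t ht => ⟨lt_of_lt_of_le hh0 ht.1, ht.2⟩)
  have hIeq : innerI s = (∫ t in Set.Ioo (0:ℝ) (s/2), hF s t)
      + ∫ t in Set.Ico (s/2) s, hF s t := by
    rw [innerI, ← hsplit, setIntegral_union hdisj measurableSet_Ico hint1 hint2]
  -- piece 1
  have hI1 : (∫ t in Set.Ioo (0:ℝ) (s/2), hF s t)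
      ≤ ∫ t in Set.Ioo (0:ℝ) (s/2), (2/s) * t ^ (-(1/2):ℝ) := by
    apply setIntegral_mono_on hint1 ((rpow_integrableOn hh0.le).const_mul _)
      measurableSet_Ioo
    intro t ht
    have := hF_le_head ht.1 ht.2
    rwa [Real.rpow_neg ht.1.le, show ((1:ℝ)/2) = (1/2 : ℝ) by norm_num,
      ← Real.sqrt_eq_rpow, ← one_div]
  have hI1' : (∫ t in Set.Ioo (0:ℝ) (s/2), (2/s) * t ^ (-(1/2):ℝ))
      = (2/s) * (2 * Real.sqrt (s/2)) := by
    rw [integral_const_mul, rpow_setIntegral hh0.le]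
  have hI1'' : (2/s) * (2 * Real.sqrt (s/2)) ≤ 4 / Real.sqrt s := by
    have h1 : Real.sqrt (s/2) ≤ Real.sqrt s := Real.sqrt_le_sqrt (by linarith)
    have h2 : (2/s) * (2 * Real.sqrt (s/2)) ≤ (2/s) * (2 * Real.sqrt s) := by
      apply mul_le_mul_of_nonneg_left (by linarith) (by positivity)
    have h3 : (2/s) * (2 * Real.sqrt s) = 4 / Real.sqrt s := by
      rw [div_mul_eq_mul_div, eq_div_iff (ne_of_gt hsq)]
      field_simp
      nlinarith
    linarith
  -- piece 2
  have hI2 : (∫ t in Set.Ico (s/2) s, hF s t) ≤ 2 / Real.sqrt s := by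
    have h := norm_setIntegral_le_of_norm_le_const (C := 4 / s ^ 2) (f := hF s)
      (s := Set.Ico (s/2) s) (μ := volume)
      (by rw [Real.volume_Ico]; exact ENNReal.ofReal_lt_top)
      (fun t ht => by
        have ht0 : 0 < t := lt_of_lt_of_le hh0 ht.1
        rw [Real.norm_eq_abs, abs_le]
        constructor
        · have := hF_nonneg ht0 ht.2
          have : (0:ℝ) ≤ 4 / s ^ 2 := by positivity
          linarith [hF_nonneg ht0 ht.2]
        · exact hF_le_tail ht0 ht.2 ht.1)
    rw [Measure.real, Real.volume_Ico, ENNReal.toReal_ofReal (by linarith)] at h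
    have h2 : (4 / s ^ 2) * (s - s/2) = 2 / s := by field_simp; ring
    have h3 : (2:ℝ) / s ≤ 2 / Real.sqrt s := by
      apply div_le_div_of_nonneg_left (by norm_num) hsq
      nlinarith
    calc (∫ t in Set.Ico (s/2) s, hF s t) ≤ ‖∫ t in Set.Ico (s/2) s, hF s t‖ :=
          le_abs_self _
      _ ≤ (4 / s ^ 2) * (s - s/2) := h
      _ = 2 / s := h2
      _ ≤ 2 / Real.sqrt s := h3
  have : (4:ℝ) / Real.sqrt s + 2 / Real.sqrt s = 6 / Real.sqrt s := by ring
  linarith [hI1, hI1' ▸ hI1, hI1'']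

lemma innerI_bound {s : ℝ} (hs : 0 < s) : innerI s ≤ 6 / Real.sqrt s := by
  rcases le_or_gt 1 s with h | h
  · exact innerI_tail h
  · have hsq : 0 < Real.sqrt s := Real.sqrt_pos.mpr hs
    have hss : Real.sqrt s * Real.sqrt s = s := Real.mul_self_sqrt hs.le
    have hle1 : Real.sqrt s ≤ 1 := by nlinarith
    have : s ≤ 6 / Real.sqrt s := by
      rw [le_div_iff₀ hsq]; nlinarith
    linarith [innerI_le s hs]

lemma innerI_stronglyMeasurable : StronglyMeasurable innerI := by
  have heq : innerI = fun s => ∫ t, (Set.Ioo (0:ℝ) s).indicator (hF s) t :=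
    funext fun s => (integral_indicator measurableSet_Ioo).symm
  rw [heq]
  apply StronglyMeasurable.integral_prod_right
    (f := fun s t => (Set.Ioo (0:ℝ) s).indicator (hF s) t)
  apply Measurable.stronglyMeasurable
  have : (Function.uncurry fun s t => (Set.Ioo (0:ℝ) s).indicator (hF s) t)
      = fun p : ℝ × ℝ => if 0 < p.2 ∧ p.2 < p.1 then hF p.1 p.2 else 0 := by
    ext p
    simp [Function.uncurry, Set.indicator_apply, Set.mem_Ioo]
  rw [this]
  exact Measurable.ite
    ((measurableSet_lt measurable_const measurable_snd).inter
      (measurableSet_lt measurable_snd measurable_fst))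
    hF_measurable measurable_const

lemma integrableOn_innerI {x : ℝ} (hx : 0 ≤ x) :
    IntegrableOn innerI (Set.Ioo 0 x) := by
  apply Measure.integrableOn_of_bounded (M := x)
  · rw [Real.volume_Ioo]; exact ENNReal.ofReal_ne_top
  · exact innerI_stronglyMeasurable.aestronglyMeasurable
  · rw [ae_restrict_iff' measurableSet_Ioo]
    filter_upwards with s hsm
    rw [Real.norm_eq_abs, abs_le]
    exact ⟨by linarith [innerI_nonneg s], by linarith [innerI_le s hsm.1, hsm.2]⟩

end RecordGAux

open RecordGAux in
/-- There are constants `C₁, C₂ > 0` with `G(x) ≤ C₁ x²` and `G(x) ≤ C₂ √x`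
for all `x ≥ 0`. -/
theorem recordG_dominations :
    ∃ C₁ C₂ : ℝ, 0 < C₁ ∧ 0 < C₂ ∧ ∀ x : ℝ, 0 ≤ x →
      recordG x ≤ C₁ * x ^ 2 ∧ recordG x ≤ C₂ * Real.sqrt x := by
  refine ⟨1, 12, one_pos, by norm_num, fun x hx => ?_⟩
  have hsq : Real.sqrt x * Real.sqrt x = x := Real.mul_self_sqrt hx
  have hsqnn : 0 ≤ Real.sqrt x := Real.sqrt_nonneg x
  -- the x² bound
  have hG1 : recordG x ≤ x ^ 2 := by
    have h := norm_setIntegral_le_of_norm_le_const (C := x) (f := innerI)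
      (s := Set.Ioo (0:ℝ) x) (μ := volume)
      (by rw [Real.volume_Ioo]; exact ENNReal.ofReal_lt_top)
      (fun s hs => by
        rw [Real.norm_eq_abs, abs_le]
        exact ⟨by linarith [innerI_nonneg s], by linarith [innerI_le s hs.1, hs.2]⟩)
    rw [Measure.real, Real.volume_Ioo, ENNReal.toReal_ofReal (by linarith)] at h
    calc recordG x ≤ ‖recordG x‖ := le_abs_self _
      _ = ‖∫ s in Set.Ioo (0:ℝ) x, innerI s‖ := by rw [recordG_eq]
      _ ≤ x * (x - 0) := h
      _ = x ^ 2 := by ring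
  refine ⟨by linarith, ?_⟩
  -- the √x bound
  have hG2 : recordG x ≤ 12 * Real.sqrt x := by
    have hmono : recordG x ≤ ∫ s in Set.Ioo (0:ℝ) x, 6 * s ^ (-(1/2):ℝ) := by
      rw [recordG_eq]
      apply setIntegral_mono_on (integrableOn_innerI hx)
        ((rpow_integrableOn hx).const_mul _) measurableSet_Ioo
      intro s hs
      have hrw : s ^ (-(1/2):ℝ) = 1 / Real.sqrt s := by
        rw [Real.rpow_neg hs.1.le, ← Real.sqrt_eq_rpow, one_div]
      rw [hrw, mul_one_div]
      exact innerI_bound hs.1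
    have hval : (∫ s in Set.Ioo (0:ℝ) x, 6 * s ^ (-(1/2):ℝ))
        = 6 * (2 * Real.sqrt x) := by
      rw [integral_const_mul, rpow_setIntegral hx]
    linarith
  linarith
end

section
/- For all real s, t with 0 < t < s, we have s·e^{-s} - t·e^{-t} - (s-t)·e^{-(s+t)} ≤ 0. -/
/-- For `0 < t < s`, `s·e^{-s} - t·e^{-t} - (s-t)·e^{-(s+t)} ≤ 0`. -/
theorem double_integrand_nonpos (s t : ℝ) (ht : 0 < t) (hts : t < s) :
    s * Real.exp (-s) - t * Real.exp (-t) - (s - t) * Real.exp (-(s + t)) ≤ 0 := by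
  have h1 := Real.add_one_le_exp (s - t)
  have h2 := Real.add_one_le_exp (-t)
  have hes := Real.exp_pos (-s)
  have key : s - t * Real.exp (s - t) - (s - t) * Real.exp (-t) ≤ 0 := by
    nlinarith [h1, h2]
  have e1 : Real.exp (-t) = Real.exp (-s) * Real.exp (s - t) := by
    rw [← Real.exp_add]; ring_nf
  have e2 : Real.exp (-(s + t)) = Real.exp (-s) * Real.exp (-t) := by
    rw [← Real.exp_add]; ring_nf
  have expand : s * Real.exp (-s) - t * Real.exp (-t) - (s - t) * Real.exp (-(s + t))
      = Real.exp (-s) * (s - t * Real.exp (s - t) - (s - t) * Real.exp (-t)) := by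
    rw [e2, e1]; ring
  rw [expand]
  exact mul_nonpos_of_nonneg_of_nonpos hes.le key
end

section
/- Let Y be Rayleigh distributed (density y·e^{-y²/2} on (0,∞)). Then for q, v > 0, √v·∫₀^{q√v} E[e^{-tY}] dt = √v·∫₀^∞ e^{-x²/2}·(1 - e^{-x·q·√v}) dx ≤ √(π/2)·min(q·v, √v). -/
open MeasureTheory Real Set Filter

lemma exp_t_integral (y a : ℝ) (hy : 0 < y) (ha : 0 ≤ a) :
    ∫ t in Set.Ioo (0 : ℝ) a, Real.exp (-(t * y)) = (1 - Real.exp (-(a * y))) / y := by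
  rw [← MeasureTheory.integral_Ioc_eq_integral_Ioo, ← intervalIntegral.integral_of_le ha]
  have : ∫ t in (0:ℝ)..a, Real.exp (-(t * y)) =
      (fun t => -Real.exp (-(t * y)) / y) a - (fun t => -Real.exp (-(t * y)) / y) 0 := by
    apply intervalIntegral.integral_eq_sub_of_hasDerivAt
    · intro t _
      have h1 : HasDerivAt (fun t : ℝ => -(t * y)) (-y) t := by
        simpa using ((hasDerivAt_id t).mul_const y).fun_neg
      have := (h1.exp).fun_neg.div_const y
      refine this.congr_deriv ?_
      field_simp
    · exact (Continuous.intervalIntegrable (by continuity) _ _)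
  rw [this]
  simp only [zero_mul, neg_zero, Real.exp_zero]
  field_simp
  ring

lemma gauss_half : ∫ x in Set.Ioi (0:ℝ), Real.exp (-x ^ 2 / 2) = Real.sqrt (Real.pi / 2) := by
  have := integral_gaussian_Ioi (1/2)
  rw [MeasureTheory.setIntegral_congr_fun measurableSet_Ioi
    (fun x _ => by ring_nf : ∀ x ∈ Set.Ioi (0:ℝ), Real.exp (-(1/2 : ℝ) * x ^ 2) = Real.exp (-x ^ 2 / 2))] at this
  rw [this, show Real.pi / (1/2 : ℝ) = 2 * Real.pi by ring]
  rw [show Real.sqrt (Real.pi / 2) = Real.sqrt ((2 * Real.pi) / 4) by congr 1; ring,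
    Real.sqrt_div (by positivity),
    show Real.sqrt 4 = 2 by rw [show (4:ℝ) = 2^2 by norm_num, Real.sqrt_sq (by norm_num : (0:ℝ) ≤ 2)]]

lemma gauss_integrable : MeasureTheory.IntegrableOn (fun x : ℝ => Real.exp (-x ^ 2 / 2)) (Set.Ioi 0) := by
  have h0 := integrable_exp_neg_mul_sq (by norm_num : (0:ℝ) < 1/2)
  have h : (fun x : ℝ => Real.exp (-(1/2:ℝ) * x ^ 2)) = fun x => Real.exp (-x ^ 2 / 2) :=
    funext fun x => by ring_nf
  rw [← h]; exact h0.integrableOn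

lemma xgauss_integrable : MeasureTheory.IntegrableOn (fun x : ℝ => x * Real.exp (-x ^ 2 / 2)) (Set.Ioi 0) := by
  have h0 := integrable_mul_exp_neg_mul_sq (by norm_num : (0:ℝ) < 1/2)
  have h : (fun x : ℝ => x * Real.exp (-(1/2:ℝ) * x ^ 2)) = fun x => x * Real.exp (-x ^ 2 / 2) :=
    funext fun x => by ring_nf
  rw [← h]; exact h0.integrableOn

lemma deriv_neg_exp (x : ℝ) : HasDerivAt (fun x : ℝ => -Real.exp (-x ^ 2 / 2))
    (x * Real.exp (-x ^ 2 / 2)) x := by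
  have h1 : HasDerivAt (fun x : ℝ => -x ^ 2 / 2) (-x) x := by
    have := ((hasDerivAt_pow 2 x).fun_neg).div_const 2
    refine this.congr_deriv ?_
    norm_num; ring
  have := (h1.exp).fun_neg
  refine this.congr_deriv ?_
  ring

lemma x_gauss : ∫ x in Set.Ioi (0:ℝ), x * Real.exp (-x ^ 2 / 2) = 1 := by
  have := MeasureTheory.integral_Ioi_of_hasDerivAt_of_tendsto
    (f := fun x : ℝ => -Real.exp (-x ^ 2 / 2)) (f' := fun x : ℝ => x * Real.exp (-x ^ 2 / 2))
    (a := 0) (m := 0) (Continuous.continuousWithinAt (by continuity))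
    (fun x _ => deriv_neg_exp x) xgauss_integrable ?_
  · simpa using this
  · have h2 : Tendsto (fun x : ℝ => -x ^ 2 / 2) atTop atBot := by
      apply Filter.Tendsto.atBot_div_const (by norm_num)
      exact Filter.tendsto_neg_atTop_atBot.comp (tendsto_pow_atTop (by norm_num))
    have := (Real.tendsto_exp_atBot.comp h2).neg
    simpa using this

/-- For `Y` Rayleigh distributed (density `y·e^{-y²/2}` on `(0,∞)`) and `q, v > 0`,
`√v·∫₀^{q√v} E[e^{-tY}] dt = √v·∫₀^∞ e^{-x²/2}(1 - e^{-xq√v}) dx ≤ √(π/2)·min(qv, √v)`. -/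
theorem mean_separation_time_bound (q v : ℝ) (hq : 0 < q) (hv : 0 < v) :
    (Real.sqrt v * ∫ t in Set.Ioo (0 : ℝ) (q * Real.sqrt v),
        ∫ y in Set.Ioi (0 : ℝ), Real.exp (-(t * y)) * (y * Real.exp (-y ^ 2 / 2))) =
      (Real.sqrt v * ∫ x in Set.Ioi (0 : ℝ),
        Real.exp (-x ^ 2 / 2) * (1 - Real.exp (-(x * q * Real.sqrt v)))) ∧
    (Real.sqrt v * ∫ x in Set.Ioi (0 : ℝ),
        Real.exp (-x ^ 2 / 2) * (1 - Real.exp (-(x * q * Real.sqrt v)))) ≤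
      Real.sqrt (Real.pi / 2) * min (q * v) (Real.sqrt v) := by
  have hs : 0 < Real.sqrt v := Real.sqrt_pos.2 hv
  have ha : 0 < q * Real.sqrt v := mul_pos hq hs
  set a : ℝ := q * Real.sqrt v with ha_def
  -- Fubini
  have hfub : MeasureTheory.Integrable
      (Function.uncurry (fun t y : ℝ => Real.exp (-(t * y)) * (y * Real.exp (-y ^ 2 / 2))))
      ((volume.restrict (Set.Ioo 0 a)).prod (volume.restrict (Set.Ioi 0))) := by
    have hconst : MeasureTheory.IntegrableOn (fun _ : ℝ => (1:ℝ)) (Set.Ioo 0 a) volume := by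
      rw [MeasureTheory.integrableOn_const_iff]
      exact Or.inr (by rw [Real.volume_Ioo]; exact ENNReal.ofReal_lt_top)
    have hg : MeasureTheory.Integrable (fun p : ℝ × ℝ => (1:ℝ) * (p.2 * Real.exp (-p.2 ^ 2 / 2)))
        ((volume.restrict (Set.Ioo 0 a)).prod (volume.restrict (Set.Ioi 0))) :=
      MeasureTheory.Integrable.mul_prod hconst xgauss_integrable
    refine hg.mono' ?_ ?_
    · exact (Continuous.aestronglyMeasurable
        (show Continuous fun p : ℝ × ℝ => Real.exp (-(p.1 * p.2)) * (p.2 * Real.exp (-p.2 ^ 2 / 2))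
          by fun_prop))
    · rw [MeasureTheory.Measure.prod_restrict]
      rw [MeasureTheory.ae_restrict_iff' (measurableSet_Ioo.prod measurableSet_Ioi)]
      refine Filter.Eventually.of_forall (fun p hp => ?_)
      obtain ⟨⟨ht0, _⟩, hy0⟩ := hp
      have hy0' : (0:ℝ) < p.2 := hy0
      simp only [Function.uncurry_def, Real.norm_eq_abs, one_mul]
      rw [abs_of_nonneg (by positivity)]
      have h1 : Real.exp (-(p.1 * p.2)) ≤ 1 :=
        Real.exp_le_one_iff.2 (by nlinarith)
      exact mul_le_of_le_one_left (by positivity) h1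
  have hswap := MeasureTheory.integral_integral_swap hfub
  -- inner integral evaluation
  have hinner : ∀ y ∈ Set.Ioi (0:ℝ),
      (∫ t in Set.Ioo (0:ℝ) a, Real.exp (-(t * y)) * (y * Real.exp (-y ^ 2 / 2))) =
        Real.exp (-y ^ 2 / 2) * (1 - Real.exp (-(y * q * Real.sqrt v))) := by
    intro y hy
    have hy0 : 0 < y := hy
    rw [MeasureTheory.integral_mul_const, exp_t_integral y a hy0 ha.le,
      show a * y = y * q * Real.sqrt v by rw [ha_def]; ring]
    field_simp
  have heq : (∫ t in Set.Ioo (0 : ℝ) a,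
        ∫ y in Set.Ioi (0 : ℝ), Real.exp (-(t * y)) * (y * Real.exp (-y ^ 2 / 2))) =
      ∫ x in Set.Ioi (0 : ℝ),
        Real.exp (-x ^ 2 / 2) * (1 - Real.exp (-(x * q * Real.sqrt v))) := by
    rw [hswap]
    exact MeasureTheory.setIntegral_congr_fun measurableSet_Ioi hinner
  refine ⟨by rw [heq], ?_⟩
  -- the bound
  set I : ℝ := ∫ x in Set.Ioi (0 : ℝ),
      Real.exp (-x ^ 2 / 2) * (1 - Real.exp (-(x * q * Real.sqrt v))) with hI_def
  have hIint : MeasureTheory.IntegrableOn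
      (fun x : ℝ => Real.exp (-x ^ 2 / 2) * (1 - Real.exp (-(x * q * Real.sqrt v))))
      (Set.Ioi 0) := by
    refine gauss_integrable.mono' (Continuous.aestronglyMeasurable (by fun_prop)) ?_
    rw [MeasureTheory.ae_restrict_iff' measurableSet_Ioi]
    refine Filter.Eventually.of_forall (fun x hx => ?_)
    have hx0 : 0 < x := hx
    have h1 : Real.exp (-(x * q * Real.sqrt v)) ≤ 1 := Real.exp_le_one_iff.2 (by nlinarith)
    rw [Real.norm_eq_abs, abs_of_nonneg (by nlinarith [Real.exp_pos (-x ^ 2 / 2)])]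
    nlinarith [Real.exp_pos (-x ^ 2 / 2), Real.exp_pos (-(x * q * Real.sqrt v))]
  have hI1 : I ≤ Real.sqrt (Real.pi / 2) := by
    rw [← gauss_half, hI_def]
    refine MeasureTheory.setIntegral_mono_on hIint gauss_integrable measurableSet_Ioi ?_
    intro x hx
    nlinarith [Real.exp_pos (-x ^ 2 / 2), Real.exp_pos (-(x * q * Real.sqrt v))]
  have hI2 : I ≤ a := by
    have hle : I ≤ ∫ x in Set.Ioi (0:ℝ), (x * Real.exp (-x ^ 2 / 2)) * a := by
      rw [hI_def]
      refine MeasureTheory.setIntegral_mono_on hIint (xgauss_integrable.mul_const a)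
        measurableSet_Ioi ?_
      intro x hx
      have hx0 : 0 < x := hx
      have h1 : 1 - Real.exp (-(x * q * Real.sqrt v)) ≤ x * q * Real.sqrt v := by
        have := Real.add_one_le_exp (-(x * q * Real.sqrt v))
        linarith
      have h2 : (0:ℝ) < Real.exp (-x ^ 2 / 2) := Real.exp_pos _
      calc Real.exp (-x ^ 2 / 2) * (1 - Real.exp (-(x * q * Real.sqrt v)))
          ≤ Real.exp (-x ^ 2 / 2) * (x * q * Real.sqrt v) := by nlinarith
        _ = (x * Real.exp (-x ^ 2 / 2)) * a := by rw [ha_def]; ring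
    rw [MeasureTheory.integral_mul_const, x_gauss, one_mul] at hle
    exact hle
  have hπ : (1:ℝ) ≤ Real.sqrt (Real.pi / 2) := by
    have h1 : (1:ℝ) ≤ Real.pi / 2 := by linarith [Real.pi_gt_three]
    calc (1:ℝ) = Real.sqrt 1 := (Real.sqrt_one).symm
      _ ≤ Real.sqrt (Real.pi / 2) := Real.sqrt_le_sqrt h1
  rw [show Real.sqrt (Real.pi / 2) * min (q * v) (Real.sqrt v)
      = min (Real.sqrt (Real.pi / 2) * (q * v)) (Real.sqrt (Real.pi / 2) * Real.sqrt v) by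
    rw [mul_min_of_nonneg _ _ (Real.sqrt_nonneg _)]]
  refine le_min ?_ ?_
  · calc Real.sqrt v * I ≤ Real.sqrt v * a := by
          exact mul_le_mul_of_nonneg_left hI2 hs.le
      _ = q * v := by rw [ha_def]; rw [show Real.sqrt v * (q * Real.sqrt v) = q * (Real.sqrt v * Real.sqrt v) by ring, Real.mul_self_sqrt hv.le]
      _ ≤ Real.sqrt (Real.pi / 2) * (q * v) := le_mul_of_one_le_left (by positivity) hπ
  · calc Real.sqrt v * I ≤ Real.sqrt v * Real.sqrt (Real.pi / 2) :=
          mul_le_mul_of_nonneg_left hI1 hs.le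
      _ = Real.sqrt (Real.pi / 2) * Real.sqrt v := mul_comm _ _
end
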